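/- (2-Amalgamation lemma) Let G be a finite abelian group and p a prime dividing |G|. Write the p-Sylow subgroup of G as C_{p^{a_1}} ⊕ ⋯ ⊕ C_{p^{a_k}} with a_1 ≥ a_2 ≥ ⋯ ≥ a_k ≥ 1 (setting a_j = 0 for j > k), and suppose a_2 > a_3. Let l be a positive integer divisible by p^{a_3+1}. If S is a dense zero-sum free sequence over G, then S contains at most 3p − 3 elements of order l. -/
import Mathlib


/-- The cross number `k(S)` of a sequence (finite multiset) `S` over an additive group:
the sum, with multiplicity, of the reciprocals of the orders of its elements. -/
noncomputable def crossNum {G : Type*} [AddCommGroup G] (S : Multiset G) : ℝ :=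
  (S.map fun g => ((addOrderOf g : ℝ))⁻¹).sum

/-- `S` is zero-sum free: no nonempty sub-multiset of `S` has sum `0`. -/
def IsZeroSumFree {G : Type*} [AddCommGroup G] (S : Multiset G) : Prop :=
  ∀ T : Multiset G, T ≤ S → T ≠ 0 → T.sum ≠ 0

/-- The little cross number `k(G)`: the maximal cross number of a zero-sum free
sequence over `G`. -/
noncomputable def littleK (G : Type*) [AddCommGroup G] : ℝ :=
  sSup {x : ℝ | ∃ S : Multiset G, IsZeroSumFree S ∧ crossNum S = x}

/-- A zero-sum free sequence `S` over `G` is dense if it has maximal cross number and,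
among zero-sum free sequences of maximal cross number, minimal length. -/
def IsDense {G : Type*} [AddCommGroup G] (S : Multiset G) : Prop :=
  IsZeroSumFree S ∧ crossNum S = littleK G ∧
    Multiset.card S =
      sInf {c : ℕ | ∃ T : Multiset G,
        IsZeroSumFree T ∧ crossNum T = littleK G ∧ Multiset.card T = c}

open MvPolynomial Finset in
lemma cw_main {p : ℕ} (hp : p.Prime) (m n : ℕ) (c : Fin m → Fin n → ZMod p)
    (hdeg : m * (p - 1) < n) :
    ∃ I : Finset (Fin n), I.Nonempty ∧ ∀ j, ∑ i ∈ I, c j i = 0 := by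
  haveI : Fact p.Prime := ⟨hp⟩
  have hp1 : p - 1 ≠ 0 := by have := hp.two_le; omega
  set F : Fin m → MvPolynomial (Fin n) (ZMod p) :=
    fun j => ∑ i, MvPolynomial.C (c j i) * (X i) ^ (p - 1) with hF
  have hdegF : ∀ j, (F j).totalDegree ≤ p - 1 := by
    intro j
    refine (totalDegree_finset_sum _ _).trans ?_
    refine Finset.sup_le fun i _ => ?_
    calc (MvPolynomial.C (c j i) * (X i) ^ (p-1)).totalDegree
        ≤ (MvPolynomial.C (c j i)).totalDegree + ((X i : MvPolynomial (Fin n) (ZMod p)) ^ (p-1)).totalDegree :=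
          totalDegree_mul _ _
      _ ≤ 0 + (p - 1) * 1 := by
          refine add_le_add (le_of_eq (totalDegree_C _)) ?_
          exact (totalDegree_pow _ _).trans (by rw [totalDegree_X])
      _ = p - 1 := by ring
  have hsumdeg : (∑ j, (F j).totalDegree) < Fintype.card (Fin n) := by
    rw [Fintype.card_fin]
    calc (∑ j, (F j).totalDegree) ≤ ∑ _j : Fin m, (p - 1) :=
          Finset.sum_le_sum fun j _ => hdegF j
      _ = m * (p - 1) := by simp [Finset.sum_const, mul_comm]
      _ < n := hdeg
  have hcw := char_dvd_card_solutions_of_fintype_sum_lt p hsumdeg (f := F)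
  have h0 : ∀ j, eval (fun _ : Fin n => (0 : ZMod p)) (F j) = 0 := by
    intro j
    simp [hF, map_sum, eval_C, eval_X, zero_pow hp1]
  have hpos : 0 < Fintype.card { x : Fin n → ZMod p // ∀ j, eval x (F j) = 0 } :=
    Fintype.card_pos_iff.mpr ⟨⟨_, h0⟩⟩
  have hcw' : p ∣ Fintype.card { x : Fin n → ZMod p // ∀ j, eval x (F j) = 0 } := by
    convert hcw using 2
  have hcard : 1 < Fintype.card { x : Fin n → ZMod p // ∀ j, eval x (F j) = 0 } := by
    have := Nat.le_of_dvd hpos hcw'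
    have := hp.two_le
    omega
  obtain ⟨⟨x, hx⟩, hxne⟩ := Fintype.exists_ne_of_one_lt_card hcard ⟨_, h0⟩
  have hxne0 : x ≠ fun _ => 0 := by
    intro h; exact hxne (Subtype.ext h)
  obtain ⟨i0, hi0⟩ := Function.ne_iff.mp hxne0
  refine ⟨Finset.univ.filter (fun i => x i ≠ 0), ⟨i0, by simpa using hi0⟩, ?_⟩
  intro j
  have := hx j
  rw [hF] at this
  simp only [map_sum, map_mul, map_pow, eval_C, eval_X] at this
  have key : ∑ i ∈ Finset.univ.filter (fun i => x i ≠ 0), c j i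
      = ∑ i : Fin n, c j i * x i ^ (p - 1) := by
    rw [Finset.sum_filter]
    refine Finset.sum_congr rfl fun i _ => ?_
    by_cases h : x i = 0
    · simp [h, zero_pow hp1]
    · simp [h, ZMod.pow_card_sub_one_eq_one h]
  rw [key, this]

open Finset in
lemma cw_pair {p : ℕ} (hp : p.Prime) (n : ℕ) (hn : 2 * (p - 1) < n)
    (y z : Fin n → ZMod p) :
    ∃ I : Finset (Fin n), I.Nonempty ∧ ∑ i ∈ I, y i = 0 ∧ ∑ i ∈ I, z i = 0 := by
  obtain ⟨I, hne, hall⟩ := cw_main hp 2 n ![y, z] hn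
  exact ⟨I, hne, hall 0, hall 1⟩

open Finset in
lemma cw_eta {p : ℕ} (hp : p.Prime) (n : ℕ) (hn : n = 3 * p - 2)
    (y z : Fin n → ZMod p) :
    ∃ I : Finset (Fin n), I.Nonempty ∧ I.card ≤ p ∧
      ∑ i ∈ I, y i = 0 ∧ ∑ i ∈ I, z i = 0 := by
  have hp2 := hp.two_le
  obtain ⟨I₀, hne₀, hall⟩ := cw_main hp 3 n ![y, z, fun _ => 1] (by omega)
  have hy₀ : ∑ i ∈ I₀, y i = 0 := hall 0
  have hz₀ : ∑ i ∈ I₀, z i = 0 := hall 1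
  have hc₀ : p ∣ I₀.card := by
    have h1 : ∑ i ∈ I₀, (1 : ZMod p) = 0 := hall 2
    have : ((I₀.card : ℕ) : ZMod p) = 0 := by simpa using h1
    exact (ZMod.natCast_eq_zero_iff _ _).mp this
  rcases le_or_gt I₀.card p with hle | hgt
  · exact ⟨I₀, hne₀, hle, hy₀, hz₀⟩
  -- I₀.card = 2p
  have hcard₀ : I₀.card = 2 * p := by
    obtain ⟨s, hs⟩ := hc₀
    have hcle : I₀.card ≤ n := by
      simpa using Finset.card_le_card (Finset.subset_univ I₀)
    have hs2 : 2 ≤ s := by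
      by_contra h
      push_neg at h
      interval_cases s <;> omega
    have hs3 : s ≤ 2 := by
      by_contra h
      push_neg at h
      have : 3 * p ≤ p * s := by
        calc 3 * p = p * 3 := by ring
        _ ≤ p * s := Nat.mul_le_mul_left p h
      omega
    have : s = 2 := by omega
    subst this
    omega
  obtain ⟨x₀, hx₀⟩ := hne₀
  set J := I₀.erase x₀ with hJ
  have hJcard : J.card = 2 * p - 1 := by
    rw [hJ, Finset.card_erase_of_mem hx₀, hcard₀]
  set f : Fin J.card → Fin n := fun i => ((J.equivFin.symm i : {x // x ∈ J}) : Fin n) with hf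
  have hfinj : Function.Injective f := by
    intro i₁ i₂ h
    exact J.equivFin.symm.injective (Subtype.coe_injective h)
  obtain ⟨I₁, hne₁, hy₁, hz₁⟩ := cw_pair hp J.card (by omega) (y ∘ f) (z ∘ f)
  set I₂ := I₁.image f with hI₂
  have hI₂J : I₂ ⊆ J := by
    intro x hx
    simp only [hI₂, Finset.mem_image] at hx
    obtain ⟨i, _, rfl⟩ := hx
    exact (J.equivFin.symm i).2
  have hI₂sub : I₂ ⊆ I₀ := hI₂J.trans (Finset.erase_subset _ _)
  have hsumy₂ : ∑ i ∈ I₂, y i = 0 := by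
    rw [hI₂, Finset.sum_image (fun a _ b _ h => hfinj h)]
    exact hy₁
  have hsumz₂ : ∑ i ∈ I₂, z i = 0 := by
    rw [hI₂, Finset.sum_image (fun a _ b _ h => hfinj h)]
    exact hz₁
  have hcard₂ : I₂.card = I₁.card := Finset.card_image_of_injective _ hfinj
  have hcard₂le : I₂.card ≤ 2 * p - 1 := by
    rw [← hJcard]; exact Finset.card_le_card hI₂J
  rcases le_or_gt I₂.card p with h2le | h2gt
  · exact ⟨I₂, hne₁.image f, h2le, hsumy₂, hsumz₂⟩
  · set K := I₀ \ I₂ with hK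
    have hx₀K : x₀ ∈ K := by
      rw [hK, Finset.mem_sdiff]
      refine ⟨hx₀, fun h => ?_⟩
      exact Finset.notMem_erase x₀ I₀ (hI₂J h)
    have hKcard : K.card = I₀.card - I₂.card := Finset.card_sdiff_of_subset hI₂sub
    have hsums := Finset.sum_sdiff (f := y) hI₂sub
    have hsumsz := Finset.sum_sdiff (f := z) hI₂sub
    refine ⟨K, ⟨x₀, hx₀K⟩, by omega, ?_, ?_⟩
    · have : ∑ i ∈ K, y i + ∑ i ∈ I₂, y i = 0 := by rw [hsums, hy₀]
      rw [hsumy₂, add_zero] at this; exact this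
    · have : ∑ i ∈ K, z i + ∑ i ∈ I₂, z i = 0 := by rw [hsumsz, hz₀]
      rw [hsumz₂, add_zero] at this; exact this


lemma exists_torsion_emb (p m : ℕ) (hp : p.Prime) (hm : 1 ≤ m) :
    ∃ ι : ZMod p →+ ZMod (p ^ m), (∀ y, ι y = 0 → y = 0) ∧
      ∀ x : ZMod (p ^ m), p • x = 0 → ∃ y, ι y = x := by
  haveI : Fact p.Prime := ⟨hp⟩
  haveI : NeZero (p ^ m) := ⟨pow_ne_zero _ hp.pos.ne'⟩
  have hpm : p * p ^ (m - 1) = p ^ m := by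
    rw [← pow_succ']
    congr 1
    omega
  have hcond : (p : ℤ) • ((p ^ (m - 1) : ℕ) : ZMod (p ^ m)) = 0 := by
    rw [natCast_zsmul, nsmul_eq_mul, ← Nat.cast_mul, hpm, ZMod.natCast_self]
  set ι : ZMod p →+ ZMod (p ^ m) :=
    ZMod.lift p ⟨(zmultiplesHom _ ((p ^ (m - 1) : ℕ) : ZMod (p ^ m))), hcond⟩ with hι
  have hnat : ∀ c : ℕ, ι (c : ZMod p) = ((c * p ^ (m - 1) : ℕ) : ZMod (p ^ m)) := by
    intro c
    have : ((c : ℤ) : ZMod p) = (c : ZMod p) := by push_cast; ring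
    rw [← this, hι, ZMod.lift_coe]
    simp [zmultiplesHom, Nat.cast_mul]
  refine ⟨ι, ?_, ?_⟩
  · intro y hy
    have hy' : ι ((y.val : ℕ) : ZMod p) = 0 := by rw [ZMod.natCast_zmod_val]; exact hy
    rw [hnat] at hy'
    have hdvd : p ^ m ∣ y.val * p ^ (m - 1) :=
      (ZMod.natCast_eq_zero_iff _ _).mp hy'
    have hdvd' : p ∣ y.val := by
      have h1 : p * p ^ (m - 1) ∣ y.val * p ^ (m - 1) := by rw [hpm]; exact hdvd
      exact (Nat.mul_dvd_mul_iff_right (pow_pos hp.pos _)).mp h1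
    have hlt : y.val < p := y.val_lt
    have h0 : y.val = 0 := Nat.eq_zero_of_dvd_of_lt hdvd' hlt
    rw [← ZMod.natCast_zmod_val y, h0, Nat.cast_zero]
  · intro x hx
    have hx' : ((p * x.val : ℕ) : ZMod (p ^ m)) = 0 := by
      push_cast
      rw [ZMod.natCast_zmod_val]
      rw [← nsmul_eq_mul]
      exact_mod_cast hx
    have hdvd : p ^ m ∣ p * x.val := (ZMod.natCast_eq_zero_iff _ _).mp hx'
    have hdvd' : p ^ (m - 1) ∣ x.val := by
      have h2 : p * p ^ (m - 1) ∣ p * x.val := by rw [hpm]; exact hdvd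
      exact (Nat.mul_dvd_mul_iff_left hp.pos).mp h2
    refine ⟨((x.val / p ^ (m - 1) : ℕ) : ZMod p), ?_⟩
    rw [hnat, Nat.div_mul_cancel hdvd', ZMod.natCast_zmod_val]

lemma multiset_map_get_le {α : Type*} (L : List α) (I : Finset (Fin L.length)) :
    Multiset.map L.get I.val ≤ (L : Multiset α) := by
  calc Multiset.map L.get I.val
      ≤ Multiset.map L.get (Finset.univ : Finset (Fin L.length)).val :=
        Multiset.map_le_map (Finset.val_le_iff.mpr (Finset.subset_univ I))
    _ = (L : Multiset α) := by
        rw [Fin.univ_def]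
        show Multiset.map L.get (List.finRange L.length : Multiset (Fin L.length)) = _
        rw [Multiset.map_coe, List.map_get_finRange]

lemma zsf_card_lt {G : Type*} [AddCommGroup G] [Finite G] {T : Multiset G}
    (h : IsZeroSumFree T) : Multiset.card T < Nat.card G := by
  haveI : Fintype G := Fintype.ofFinite G
  by_contra hcon
  push_neg at hcon
  set N := Nat.card G with hN
  set L := T.toList with hL
  have hlen : N ≤ L.length := by
    rw [hL, Multiset.length_toList]; exact hcon
  have hcardlt : Fintype.card G < Fintype.card (Fin (N + 1)) := by
    rw [Fintype.card_fin, hN, Nat.card_eq_fintype_card]; omega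
  obtain ⟨i, j, hij, heq⟩ :=
    Fintype.exists_ne_map_eq_of_card_lt (fun i : Fin (N + 1) => (L.take i).sum) hcardlt
  wlog hlt : (i : ℕ) < (j : ℕ) generalizing i j
  · refine this j i hij.symm heq.symm ?_
    have hne : (i : ℕ) ≠ (j : ℕ) := Fin.val_ne_of_ne hij
    omega
  set D := (L.take j).drop i with hD
  have htt : (L.take j).take i = L.take i := by
    rw [List.take_take]
    congr 1
    omega
  have hsplit : L.take i ++ D = L.take j := by
    rw [hD, ← htt]; exact List.take_append_drop _ _
  have hDsum : D.sum = 0 := by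
    have := congrArg List.sum hsplit
    rw [List.sum_append] at this
    have h2 : (L.take i).sum + D.sum = (L.take i).sum + 0 := by
      rw [add_zero, this, ← heq]
    exact add_left_cancel h2
  have hDne : D ≠ [] := by
    have hjlen : (j : ℕ) ≤ L.length := by
      have := j.2; omega
    have : D.length = (j : ℕ) - i := by
      rw [hD, List.length_drop, List.length_take]
      omega
    intro hnil
    rw [hnil] at this
    simp at this
    omega
  have hDle : (D : Multiset G) ≤ T := by
    have h1 : D.Sublist (L.take j) := List.drop_sublist _ _
    have h2 : (L.take j).Sublist L := List.take_sublist _ _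
    have : (D : Multiset G) ≤ (L : Multiset G) :=
      Multiset.coe_le.mpr (h1.trans h2).subperm
    rwa [hL, Multiset.coe_toList] at this
  exact h _ hDle (by simpa using hDne) (by simpa using hDsum)

lemma crossNum_add {G : Type*} [AddCommGroup G] (A B : Multiset G) :
    crossNum (A + B) = crossNum A + crossNum B := by
  simp [crossNum]

lemma crossNum_le_card {G : Type*} [AddCommGroup G] [Finite G] (T : Multiset G) :
    crossNum T ≤ (Multiset.card T : ℝ) := by
  have : ∀ x ∈ T.map (fun g => ((addOrderOf g : ℝ))⁻¹), x ≤ 1 := by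
    intro x hx
    obtain ⟨g, _, rfl⟩ := Multiset.mem_map.mp hx
    have h1 : 1 ≤ addOrderOf g := addOrderOf_pos g
    have : (1 : ℝ) ≤ (addOrderOf g : ℝ) := by exact_mod_cast h1
    rw [inv_le_one_iff₀]
    right; exact this
  calc crossNum T ≤ (Multiset.card (T.map fun g => ((addOrderOf g : ℝ))⁻¹)) • (1 : ℝ) :=
        Multiset.sum_le_card_nsmul _ _ this
    _ = (Multiset.card T : ℝ) := by simp

lemma crossNum_bound_mem {G : Type*} [AddCommGroup G] [Finite G] :
    ∀ x ∈ {x : ℝ | ∃ S : Multiset G, IsZeroSumFree S ∧ crossNum S = x},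
      x ≤ (Nat.card G : ℝ) := by
  rintro x ⟨T, hT, rfl⟩
  calc crossNum T ≤ (Multiset.card T : ℝ) := crossNum_le_card T
    _ ≤ (Nat.card G : ℝ) := by exact_mod_cast (zsf_card_lt hT).le

/-- (2-Amalgamation lemma) Let `p` be a prime dividing `|G|`, and write the `p`-Sylow
subgroup of `G` as `C_{p^{a_1}} ⊕ ⋯ ⊕ C_{p^{a_k}}` with `a_1 ≥ ⋯ ≥ a_k ≥ 1` (and
`a_j = 0` for `j > k`), i.e. `G ≅ (⨁_{j=1}^k C_{p^{a_j}}) ⊕ G'` with `p ∤ |G'|`.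
Suppose `a_2 > a_3` and `p^{a_3+1} ∣ l`. Then a dense zero-sum free sequence `S`
over `G` contains at most `3p - 3` elements of order `l`. -/
theorem two_amalgamation_lemma
    (G : Type*) [AddCommGroup G] [Finite G] (p : ℕ) (hp : p.Prime)
    (hpG : p ∣ Nat.card G)
    (k : ℕ) (a : ℕ → ℕ)
    (hanti : ∀ i j : ℕ, 1 ≤ i → i ≤ j → a j ≤ a i)
    (hpos : ∀ j : ℕ, 1 ≤ j → j ≤ k → 1 ≤ a j)
    (hzero : ∀ j : ℕ, k < j → a j = 0)
    (G' : Type*) [AddCommGroup G'] [Finite G'] (hG' : ¬ p ∣ Nat.card G')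
    (e : G ≃+ (∀ j : Fin k, ZMod (p ^ a (j.1 + 1))) × G')
    (hgap : a 3 < a 2)
    (l : ℕ) (hl : 0 < l) (hldvd : p ^ (a 3 + 1) ∣ l)
    (S : Multiset G) (hS : IsDense S) :
    Multiset.card (S.filter fun g => addOrderOf g = l) ≤ 3 * p - 3 := by
  classical
  have hp2 := hp.two_le
  by_contra hcon
  push_neg at hcon
  set Fm := S.filter (fun g => addOrderOf g = l) with hFm
  have hk2 : 2 ≤ k := by
    by_contra hk
    push_neg at hk
    have := hzero 2 (by omega)
    omega
  have ha1 : a 2 ≤ a 1 := hanti 1 2 le_rfl (by omega)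
  have hpl : p ∣ l := dvd_trans (dvd_pow_self p (Nat.succ_ne_zero _)) hldvd
  set q := l / p with hqdef
  have hq : p * q = l := Nat.mul_div_cancel' hpl
  have hqpos : 0 < q := by
    rcases Nat.eq_zero_or_pos q with h | h
    · rw [h, mul_zero] at hq; omega
    · exact h
  have hqlt : q < l := by
    have h2q : 2 * q ≤ p * q := Nat.mul_le_mul_right q hp2
    omega
  have hpa3q : p ^ a 3 ∣ q := by
    have h1 : p * p ^ a 3 ∣ p * q := by
      rw [hq]
      calc p * p ^ a 3 = p ^ (a 3 + 1) := (pow_succ' p (a 3)).symm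
        _ ∣ l := hldvd
    exact (Nat.mul_dvd_mul_iff_left hp.pos).mp h1
  have hcardF : 3 * p - 2 ≤ Multiset.card Fm := by omega
  set L : List G := Fm.toList.take (3 * p - 2) with hLdef
  have hlen : L.length = 3 * p - 2 := by
    rw [hLdef, List.length_take, Multiset.length_toList]
    omega
  have hmemF : ∀ i : Fin L.length, L.get i ∈ Fm := by
    intro i
    have h1 : L.get i ∈ L := by simpa using L.get_mem i.1 i.2
    have h2 : L.get i ∈ Fm.toList := (List.take_subset _ _) h1
    exact (Multiset.mem_toList).mp h2
  have hordl : ∀ i, addOrderOf (L.get i) = l := by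
    intro i
    have hm := hmemF i
    rw [hFm] at hm
    exact (Multiset.mem_filter.mp hm).2
  set w : Fin L.length → G := L.get with hw
  set v : Fin L.length → (∀ j : Fin k, ZMod (p ^ a (j.1 + 1))) × G' :=
    fun i => e (w i) with hv
  have hlw : ∀ i, l • (w i) = 0 := by
    intro i
    rw [← hordl i]
    exact addOrderOf_nsmul_eq_zero _
  have hlv : ∀ i, l • (v i) = 0 := by
    intro i
    have hnat : e (l • w i) = l • e (w i) := map_nsmul _ _ _
    calc l • v i = e (l • w i) := hnat.symm
      _ = 0 := by rw [hlw i, map_zero]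
  have hcomp1 : ∀ (c : ℕ) (x : (∀ j : Fin k, ZMod (p ^ a (j.1 + 1))) × G') (j : Fin k),
      (c • x).1 j = c • (x.1 j) := fun c x j => rfl
  have hcomp2 : ∀ (c : ℕ) (x : (∀ j : Fin k, ZMod (p ^ a (j.1 + 1))) × G'),
      (c • x).2 = c • x.2 := fun c x => rfl
  set j0 : Fin k := ⟨0, by omega⟩ with hj0def
  set j1 : Fin k := ⟨1, by omega⟩ with hj1def
  obtain ⟨ι₁, hι₁inj, hι₁surj⟩ :=
    exists_torsion_emb p (a ((j0 : ℕ) + 1)) hp (show 1 ≤ a 1 by omega)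
  obtain ⟨ι₂, hι₂inj, hι₂surj⟩ :=
    exists_torsion_emb p (a ((j1 : ℕ) + 1)) hp (show 1 ≤ a 2 by omega)
  have htor : ∀ (i) (j : Fin k), p • (q • (v i).1 j) = 0 := by
    intro i j
    have h1 : (l • v i).1 j = 0 := by rw [hlv i]; rfl
    calc p • (q • (v i).1 j) = (q * p) • (v i).1 j := (mul_nsmul _ q p).symm
      _ = l • (v i).1 j := by rw [mul_comm q p, hq]
      _ = (l • v i).1 j := (hcomp1 l (v i) j).symm
      _ = 0 := h1
  choose y hy using fun i => hι₁surj (q • (v i).1 j0) (htor i j0)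
  choose z hz using fun i => hι₂surj (q • (v i).1 j1) (htor i j1)
  obtain ⟨I, hIne, hIcard, hIy, hIz⟩ := cw_eta hp L.length hlen y z
  set T : Multiset G := I.val.map w with hT
  have hTle : T ≤ S := by
    calc T ≤ (L : Multiset G) := multiset_map_get_le L I
      _ ≤ (Fm.toList : Multiset G) := Multiset.coe_le.mpr (List.take_sublist _ _).subperm
      _ = Fm := Multiset.coe_toList _
      _ ≤ S := Multiset.filter_le _ _
  have hTcard : Multiset.card T = I.card := by rw [hT]; simp
  have hTne : T ≠ 0 := by
    intro h0
    have hcard0 := congrArg Multiset.card h0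
    rw [hTcard] at hcard0
    simp at hcard0
    exact hIne.ne_empty hcard0
  have hTmem : ∀ g ∈ T, addOrderOf g = l := by
    intro g hg
    obtain ⟨i, hi, rfl⟩ := Multiset.mem_map.mp hg
    exact hordl i
  set h := T.sum with hh
  have hhsum : h = ∑ i ∈ I, w i := rfl
  have hqh : q • h = 0 := by
    apply (AddEquiv.map_eq_zero_iff e).mp
    have h1 : e (q • h) = ∑ i ∈ I, q • v i := by
      rw [map_nsmul, hhsum, map_sum, Finset.smul_sum]
    rw [h1, Prod.ext_iff]
    constructor
    · rw [Prod.fst_sum, Prod.fst_zero]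
      funext j
      rw [Finset.sum_apply, Pi.zero_apply]
      by_cases hj0 : (j : ℕ) = 0
      · have hje : j = j0 := Fin.ext hj0
        subst hje
        calc ∑ i ∈ I, (q • v i).1 j0 = ∑ i ∈ I, ι₁ (y i) := by
              refine Finset.sum_congr rfl fun i _ => ?_
              rw [hcomp1, ← hy i]
          _ = ι₁ (∑ i ∈ I, y i) := (map_sum ι₁ y I).symm
          _ = 0 := by rw [hIy, map_zero]
      by_cases hj1 : (j : ℕ) = 1
      · have hje : j = j1 := Fin.ext hj1
        subst hje
        calc ∑ i ∈ I, (q • v i).1 j1 = ∑ i ∈ I, ι₂ (z i) := by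
              refine Finset.sum_congr rfl fun i _ => ?_
              rw [hcomp1, ← hz i]
          _ = ι₂ (∑ i ∈ I, z i) := (map_sum ι₂ z I).symm
          _ = 0 := by rw [hIz, map_zero]
      · apply Finset.sum_eq_zero
        intro i _
        rw [hcomp1, nsmul_eq_mul]
        have haj : a ((j : ℕ) + 1) ≤ a 3 := hanti 3 ((j : ℕ) + 1) (by omega) (by omega)
        have hdvd : p ^ a ((j : ℕ) + 1) ∣ q := dvd_trans (pow_dvd_pow p haj) hpa3q
        rw [(ZMod.natCast_eq_zero_iff q _).mpr hdvd, zero_mul]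
    · rw [Prod.snd_sum, Prod.snd_zero]
      apply Finset.sum_eq_zero
      intro i _
      rw [hcomp2]
      have hl2 : l • (v i).2 = 0 := by
        rw [← hcomp2 l (v i), hlv i]
        rfl
      have hdl : addOrderOf ((v i).2) ∣ l := addOrderOf_dvd_iff_nsmul_eq_zero.mpr hl2
      have hdG' : addOrderOf ((v i).2) ∣ Nat.card G' := addOrderOf_dvd_natCard _
      have hcop : (addOrderOf ((v i).2)).Coprime p :=
        (hp.coprime_iff_not_dvd.mpr (fun hdvd => hG' (hdvd.trans hdG'))).symm
      have hdq : addOrderOf ((v i).2) ∣ q := by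
        refine hcop.dvd_of_dvd_mul_right ?_
        rw [mul_comm q p, hq]
        exact hdl
      exact addOrderOf_dvd_iff_nsmul_eq_zero.mp hdq
  have hordh : addOrderOf h ∣ q := addOrderOf_dvd_iff_nsmul_eq_zero.mpr hqh
  have hhne : h ≠ 0 := hS.1 T hTle hTne
  have ht1 : I.card ≠ 1 := by
    intro h1
    have hc1 : Multiset.card T = 1 := by rw [hTcard, h1]
    obtain ⟨g, hg⟩ := Multiset.card_eq_one.mp hc1
    have hgord : addOrderOf g = l := hTmem g (by rw [hg]; simp)
    have hhg : h = g := by rw [hh, hg, Multiset.sum_singleton]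
    rw [hhg, hgord] at hordh
    have := Nat.le_of_dvd hqpos hordh
    omega
  have ht2 : 2 ≤ I.card := by
    have := Finset.card_pos.mpr hIne
    omega
  set S' : Multiset G := (S - T) + {h} with hS'def
  have hzsf' : IsZeroSumFree S' := by
    intro U hU hUne hUsum
    by_cases hhU : h ∈ U
    · set W := (U.erase h) + T with hW
      have hWle : W ≤ S := by
        rw [Multiset.le_iff_count]
        intro g
        have hcU : U.count g ≤ (S - T).count g + ({h} : Multiset G).count g := by
          have := Multiset.le_iff_count.mp hU g
          rwa [Multiset.count_add] at this
        have hcsub : (S - T).count g = S.count g - T.count g := Multiset.count_sub g S T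
        have hcT : T.count g ≤ S.count g := Multiset.count_le_of_le g hTle
        have hWc : W.count g = (U.erase h).count g + T.count g := by
          rw [hW, Multiset.count_add]
        by_cases hgh : g = h
        · have h1 : (U.erase h).count g = U.count g - 1 := by
            rw [hgh]; exact Multiset.count_erase_self h U
          have h2 : ({h} : Multiset G).count g = 1 := by rw [hgh]; simp
          have h3 : 1 ≤ U.count g := by
            rw [hgh]; exact Multiset.one_le_count_iff_mem.mpr hhU
          omega
        · have h1 : (U.erase h).count g = U.count g := Multiset.count_erase_of_ne hgh U
          have h2 : ({h} : Multiset G).count g = 0 := by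
            simp [Multiset.count_singleton, hgh]
          omega
      have hWne : W ≠ 0 := by
        intro h0
        apply hTne
        have : T ≤ W := Multiset.le_add_left _ _
        exact Multiset.le_zero.mp (h0 ▸ this)
      have hWsum : W.sum = 0 := by
        rw [hW, Multiset.sum_add]
        have hUer : h + (U.erase h).sum = U.sum := by
          rw [← Multiset.sum_cons, Multiset.cons_erase hhU]
        have her : (U.erase h).sum = U.sum - h := eq_sub_of_add_eq' hUer
        rw [her, hUsum, ← hh, zero_sub, neg_add_cancel]
      exact hS.1 W hWle hWne hWsum
    · have hUle : U ≤ S := by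
        have hle1 : U ≤ S - T := by
          rw [Multiset.le_iff_count]
          intro g
          have hcU := Multiset.le_iff_count.mp hU g
          rw [Multiset.count_add] at hcU
          by_cases hgh : g = h
          · have : U.count g = 0 := by
              rw [hgh]; exact Multiset.count_eq_zero_of_notMem hhU
            omega
          · have h2 : ({h} : Multiset G).count g = 0 := by
              simp [Multiset.count_singleton, hgh]
            omega
        exact hle1.trans (Multiset.sub_le_self S T)
      exact hS.1 U hUle hUne hUsum
  have hcrossT : crossNum T = (I.card : ℝ) * (l : ℝ)⁻¹ := by
    rw [crossNum]
    have hrep : T.map (fun g => ((addOrderOf g : ℝ))⁻¹)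
        = Multiset.replicate (Multiset.card T) ((l : ℝ))⁻¹ := by
      apply Multiset.eq_replicate.mpr
      refine ⟨by simp, ?_⟩
      intro x hx
      obtain ⟨g, hg, rfl⟩ := Multiset.mem_map.mp hx
      rw [hTmem g hg]
    rw [hrep, Multiset.sum_replicate, hTcard, nsmul_eq_mul]
  have hsplit : crossNum S = crossNum (S - T) + crossNum T := by
    rw [← crossNum_add, tsub_add_cancel_of_le hTle]
  have hcrossS' : crossNum S' = crossNum (S - T) + (addOrderOf h : ℝ)⁻¹ := by
    rw [hS'def, crossNum_add]
    congr 1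
    rw [crossNum]
    simp
  have hge : crossNum S ≤ crossNum S' := by
    rw [hcrossS', hsplit, hcrossT]
    have hop : 0 < addOrderOf h := addOrderOf_pos h
    have hoq : addOrderOf h ≤ q := Nat.le_of_dvd hqpos hordh
    have h1 : (q : ℝ)⁻¹ ≤ (addOrderOf h : ℝ)⁻¹ := by
      apply inv_anti₀
      · exact_mod_cast hop
      · exact_mod_cast hoq
    have h2 : (I.card : ℝ) * (l : ℝ)⁻¹ ≤ (q : ℝ)⁻¹ := by
      have hIp : (I.card : ℝ) ≤ (p : ℝ) := by exact_mod_cast hIcard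
      have hppos : (0 : ℝ) < (p : ℝ) := by exact_mod_cast hp.pos
      have hqrpos : (0 : ℝ) < (q : ℝ) := by exact_mod_cast hqpos
      have hleq : (l : ℝ) = (p : ℝ) * (q : ℝ) := by exact_mod_cast hq.symm
      rw [hleq, mul_inv]
      calc (I.card : ℝ) * ((p : ℝ)⁻¹ * (q : ℝ)⁻¹)
          ≤ (p : ℝ) * ((p : ℝ)⁻¹ * (q : ℝ)⁻¹) := by
            apply mul_le_mul_of_nonneg_right hIp
            positivity
        _ = (q : ℝ)⁻¹ := by field_simp
    linarith
  have hbdd : BddAbove {x : ℝ | ∃ U : Multiset G, IsZeroSumFree U ∧ crossNum U = x} :=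
    ⟨(Nat.card G : ℝ), fun x hx => crossNum_bound_mem x hx⟩
  have hle' : crossNum S' ≤ littleK G := by
    rw [littleK]
    exact le_csSup hbdd ⟨S', hzsf', rfl⟩
  have heq' : crossNum S' = littleK G := le_antisymm hle' (by rw [← hS.2.1]; exact hge)
  have hmem : Multiset.card S' ∈ {c : ℕ | ∃ T : Multiset G,
      IsZeroSumFree T ∧ crossNum T = littleK G ∧ Multiset.card T = c} :=
    ⟨S', hzsf', heq', rfl⟩
  have hinf := Nat.sInf_le hmem
  have hcards : Multiset.card S' = Multiset.card S - I.card + 1 := by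
    rw [hS'def, Multiset.card_add, Multiset.card_sub hTle, hTcard]
    simp
  have htS : I.card ≤ Multiset.card S := by
    rw [← hTcard]
    exact Multiset.card_le_card hTle
  rw [← hS.2.2] at hinf
  omega
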